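/- Let s ≥ 1, k ≥ 1 and t_1, …, t_k ≥ 1 be integers, and set m = s + t_1 + … + t_k. Then the disjoint union of paths P_{2s} ∪ P_{2t_1+1} ∪ P_{2t_2+1} ∪ … ∪ P_{2t_k+1} is (isomorphic to) a subgraph of the disjoint union P_{2m−1} ∪ P_{2m−2}. -/

import Mathlib

open SimpleGraph Finset

/-- Number of colors used by an edge-coloring of the complete graph on `Fin n`. -/
noncomputable def colorCount {n : ℕ} (c : Sym2 (Fin n) → ℕ) : ℕ :=
  (c '' (⊤ : SimpleGraph (Fin n)).edgeSet).ncard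

/-- The coloring `c` of `K_n` admits a rainbow copy of the graph `G`. -/
def HasRainbowCopy {α : Type*} {n : ℕ} (c : Sym2 (Fin n) → ℕ) (G : SimpleGraph α) : Prop :=
  ∃ f : α → Fin n, Function.Injective f ∧
    ∀ e₁ ∈ G.edgeSet, ∀ e₂ ∈ G.edgeSet, e₁ ≠ e₂ → c (Sym2.map f e₁) ≠ c (Sym2.map f e₂)

/-- The anti-Ramsey number `ar(K_n, G)`: the maximum number of colors in an edge-coloring
of `K_n` with no rainbow copy of `G`. -/
noncomputable def antiRamsey (n : ℕ) {α : Type*} (G : SimpleGraph α) : ℕ :=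
  sSup {m | ∃ c : Sym2 (Fin n) → ℕ, ¬ HasRainbowCopy c G ∧ colorCount c = m}

/-- The linear forest `P_{p 0} ∪ ⋯ ∪ P_{p (k-1)}`; component `i` is a path on `p i` vertices. -/
def linearForest (k : ℕ) (p : Fin k → ℕ) : SimpleGraph (Σ i : Fin k, Fin (p i)) where
  Adj u v := u.1 = v.1 ∧ (u.2.val + 1 = v.2.val ∨ v.2.val + 1 = u.2.val)
  symm := by
    constructor
    rintro u v ⟨h1, h2⟩
    exact ⟨h1.symm, h2.symm⟩
  loopless := by constructor; rintro u ⟨-, h⟩; omega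

/-- **Claim (Section 3).** For `s ≥ 1`, `k ≥ 1`, `t₁, …, t_k ≥ 1` and `m = s + t₁ + ⋯ + t_k`,
the disjoint union `P_{2s} ∪ P_{2t₁+1} ∪ ⋯ ∪ P_{2t_k+1}` (given by the length function `P`)
is a subgraph of `P_{2m-1} ∪ P_{2m-2}`: there is an injective map on vertices sending edges
to edges. -/
private lemma embed_aux (n M0 M1 : ℕ) (P : Fin n → ℕ) (a : ℕ → ℕ) (pos : Fin n → ℕ) (r : ℕ)
    (h1 : ∀ i, a (pos i) = P i)
    (h2 : Function.Injective pos)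
    (h3 : ∀ i, pos i < n)
    (h4 : (∑ p ∈ Finset.range r, a p) ≤ M0)
    (h5 : (∑ p ∈ Finset.range n, a p) ≤ M1 + ∑ p ∈ Finset.range r, a p) :
    ∃ f : (Σ i : Fin n, Fin (P i)) → (Σ i : Fin 2, Fin (![M0, M1] i)),
      Function.Injective f ∧
        ∀ u v : Σ i : Fin n, Fin (P i),
          (linearForest n P).Adj u v →
            (linearForest 2 ![M0, M1]).Adj (f u) (f v) := by
  classical
  set W : ℕ → ℕ := fun p => ∑ q ∈ Finset.range p, a q with hWdef
  have Wmono : ∀ {p q : ℕ}, p ≤ q → W p ≤ W q := fun h =>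
    Finset.sum_le_sum_of_subset (Finset.range_subset_range.2 h)
  have key0 : ∀ i : Fin n, W (pos i) + P i = W (pos i + 1) := by
    intro i
    simp only [hWdef, Finset.sum_range_succ, h1]
  have hWn : ∀ i : Fin n, W (pos i + 1) ≤ W n := fun i => Wmono (h3 i)
  have hge : ∀ i : Fin n, ¬ W (pos i + 1) ≤ W r → W r ≤ W (pos i) := by
    intro i h
    rcases le_or_gt r (pos i) with h' | h'
    · exact Wmono h'
    · exact absurd (Wmono h') h
  have hb0 : ∀ (i : Fin n) (v : Fin (P i)), W (pos i + 1) ≤ W r →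
      W (pos i) + v.val < M0 := by
    intro i v h
    have := key0 i; have := v.isLt
    have h4' : W r ≤ M0 := h4
    omega
  have hb1 : ∀ (i : Fin n) (v : Fin (P i)), ¬ W (pos i + 1) ≤ W r →
      W (pos i) + v.val - W r < M1 := by
    intro i v h
    have := key0 i; have := v.isLt; have := hWn i; have := hge i h
    have h5' : W n ≤ M1 + W r := h5
    omega
  refine ⟨fun x => if h : W (pos x.1 + 1) ≤ W r
      then ⟨0, ⟨W (pos x.1) + x.2.val, by simpa using hb0 x.1 x.2 h⟩⟩
      else ⟨1, ⟨W (pos x.1) + x.2.val - W r, by simpa using hb1 x.1 x.2 h⟩⟩, ?_, ?_⟩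
  · rintro ⟨i, v⟩ ⟨i', v'⟩ hxy
    dsimp only at hxy
    have main : ∀ (j j' : Fin n), pos j < pos j' → ∀ (w : Fin (P j)),
        W (pos j) + w.val < W (pos j') := by
      intro j j' hlt w
      have := key0 j
      have := Wmono (show pos j + 1 ≤ pos j' from hlt)
      have := w.isLt
      omega
    have heq : W (pos i) + v.val = W (pos i') + v'.val := by
      split_ifs at hxy with hA hB hB
      · have := congrArg (fun z : (Σ j : Fin 2, Fin (![M0, M1] j)) => (z.2 : ℕ)) hxy
        simpa using this
      · exfalso
        have h0 := congrArg (fun z : (Σ j : Fin 2, Fin (![M0, M1] j)) => (z.1 : Fin 2)) hxy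
        simp at h0
      · exfalso
        have h0 := congrArg (fun z : (Σ j : Fin 2, Fin (![M0, M1] j)) => (z.1 : Fin 2)) hxy
        simp at h0
      · have h' := congrArg (fun z : (Σ j : Fin 2, Fin (![M0, M1] j)) => (z.2 : ℕ)) hxy
        simp only at h'
        have := hge i hA
        have := hge i' hB
        omega
    have hii : i = i' := by
      by_contra hne
      rcases lt_or_gt_of_ne (fun hp => hne (h2 hp)) with hlt | hlt
      · have h1' := main i i' hlt v
        have := v'.isLt
        omega
      · have h1' := main i' i hlt v'
        have := v.isLt
        omega
    subst hii
    have hv : v = v' := Fin.ext (by omega)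
    rw [hv]
  · rintro ⟨i, v⟩ ⟨i', v'⟩ hadj
    have hii : i = i' := hadj.1
    subst hii
    have hvv : v.val + 1 = v'.val ∨ v'.val + 1 = v.val := hadj.2
    dsimp only
    split_ifs with h
    · refine ⟨rfl, ?_⟩
      dsimp only
      omega
    · refine ⟨rfl, ?_⟩
      dsimp only
      have := hge i h
      omega

theorem paths_subgraph_two_long_paths (s k : ℕ) (hs : 1 ≤ s) (hk : 1 ≤ k)
    (t : Fin k → ℕ) (ht : ∀ i, 1 ≤ t i) (m : ℕ) (hm : m = s + ∑ i, t i)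
    (P : Fin (k + 1) → ℕ) (hP : P = Fin.cons (2 * s) (fun j => 2 * t j + 1)) :
    ∃ f : (Σ i : Fin (k + 1), Fin (P i)) → (Σ i : Fin 2, Fin (![2 * m - 1, 2 * m - 2] i)),
      Function.Injective f ∧
        ∀ u v : Σ i : Fin (k + 1), Fin (P i),
          (linearForest (k + 1) P).Adj u v →
            (linearForest 2 ![2 * m - 1, 2 * m - 2]).Adj (f u) (f v) := by
  classical
  set T := ∑ i, t i with hT
  set P' : ℕ → ℕ := fun p => if h : p < k + 1 then P ⟨p, h⟩ else 0 with hP'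
  set t' : ℕ → ℕ := fun j => if h : j < k then t ⟨j, h⟩ else 0 with ht'
  have hP'eq : ∀ i : Fin (k + 1), P' (i : ℕ) = P i := by
    intro i
    simp [hP', i.isLt]
    intro h; have := i.isLt; omega
  have hP'0 : P' 0 = 2 * s := by
    have h0 : (0 : ℕ) < k + 1 := by omega
    simp only [hP', dif_pos h0, hP]
    have : (⟨0, h0⟩ : Fin (k + 1)) = 0 := rfl
    rw [this, Fin.cons_zero]
  have hP'succ : ∀ p, 1 ≤ p → p ≤ k → P' p = 2 * t' (p - 1) + 1 := by
    intro p h1p hpk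
    have hpk1 : p < k + 1 := by omega
    have hp1 : p - 1 < k := by omega
    simp only [hP', ht', dif_pos hpk1, dif_pos hp1, hP]
    have : (⟨p, hpk1⟩ : Fin (k + 1)) = Fin.succ ⟨p - 1, hp1⟩ := by
      apply Fin.ext
      simp [Fin.val_succ]
      omega
    rw [this, Fin.cons_succ]
  have ht'1 : ∀ j, j < k → 1 ≤ t' j := by
    intro j hj
    simp only [ht', dif_pos hj]
    exact ht _
  have ht'le : ∀ j, j < k → t' j + (k - 1) ≤ T := by
    intro j hj
    have hTe : T = t ⟨j, hj⟩ + ∑ i ∈ univ.erase ⟨j, hj⟩, t i := by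
      rw [hT, ← Finset.add_sum_erase _ _ (mem_univ (⟨j, hj⟩ : Fin k))]
    have hcard : (univ.erase (⟨j, hj⟩ : Fin k)).card = k - 1 := by
      simp [Finset.card_erase_of_mem]
    have hrest : (univ.erase (⟨j, hj⟩ : Fin k)).card ≤ ∑ i ∈ univ.erase ⟨j, hj⟩, t i := by
      calc (univ.erase (⟨j, hj⟩ : Fin k)).card = ∑ _i ∈ univ.erase ⟨j, hj⟩, 1 := by simp
        _ ≤ _ := Finset.sum_le_sum (fun i _ => ht i)
    simp only [ht', dif_pos hj]
    omega
  have hTk : k ≤ T := by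
    have := ht'le 0 hk
    have := ht'1 0 hk
    omega
  set a : ℕ → ℕ := fun p => if p = 0 then P' 1 else if p = 1 then P' 0 else P' p with ha
  set pos : Fin (k + 1) → ℕ :=
    fun i => if (i : ℕ) = 0 then 1 else if (i : ℕ) = 1 then 0 else (i : ℕ) with hpos
  have h1 : ∀ i : Fin (k + 1), a (pos i) = P i := by
    intro i
    by_cases h0 : (i : ℕ) = 0
    · have e1 : pos i = 1 := by simp [hpos, h0]; exact Fin.ext (by simp [h0])
      have e2 : a 1 = P' 0 := by simp [ha]
      rw [e1, e2, ← h0, hP'eq]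
    · by_cases hone : (i : ℕ) = 1
      · have e1 : pos i = 0 := by simp [hpos, h0, hone]; intro h; simp [h] at h0
        have e2 : a 0 = P' 1 := by simp [ha]
        rw [e1, e2, ← hone, hP'eq]
      · have e1 : pos i = (i : ℕ) := by simp [hpos, h0, hone]; intro h; simp [h] at h0
        have e2 : a (i : ℕ) = P' (i : ℕ) := by simp [ha, h0, hone]
        rw [e1, e2, hP'eq]
  have h2 : Function.Injective pos := by
    intro i j hij
    simp only [hpos] at hij
    apply Fin.ext
    split_ifs at hij <;> omega
  have h3 : ∀ i : Fin (k + 1), pos i < k + 1 := by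
    intro i
    have := i.isLt
    simp only [hpos]
    split_ifs <;> omega
  have ha0 : a 0 = 2 * t' 0 + 1 := by
    have : a 0 = P' 1 := by simp [ha]
    rw [this, hP'succ 1 le_rfl hk]
  have ha1 : a 1 = 2 * s := by simp [ha, hP'0]
  have hsplit : ∀ g : ℕ → ℕ,
      ∑ p ∈ Finset.range (k + 1), g p = g 0 + g 1 + ∑ p ∈ Finset.Ico 2 (k + 1), g p := by
    intro g
    rw [Finset.range_eq_Ico, Finset.sum_eq_sum_Ico_succ_bot (by omega : 0 < k + 1),
      Finset.sum_eq_sum_Ico_succ_bot (by omega : 1 < k + 1)]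
    ring
  have htotal : ∑ p ∈ Finset.range (k + 1), a p = 2 * m + k := by
    have e1 : ∑ p ∈ Finset.range (k + 1), a p = ∑ p ∈ Finset.range (k + 1), P' p := by
      rw [hsplit a, hsplit P']
      have e2 : (∑ p ∈ Finset.Ico 2 (k + 1), a p) = ∑ p ∈ Finset.Ico 2 (k + 1), P' p := by
        refine Finset.sum_congr rfl (fun p hp => ?_)
        simp only [Finset.mem_Ico] at hp
        have hp0 : p ≠ 0 := by omega
        have hp1 : p ≠ 1 := by omega
        simp [ha, hp0, hp1]
      have e3 : a 0 = P' 1 := by simp [ha]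
      have e4 : a 1 = P' 0 := by simp [ha]
      omega
    have e5 : ∑ p ∈ Finset.range (k + 1), P' p = ∑ i : Fin (k + 1), P i := by
      rw [← Fin.sum_univ_eq_sum_range]
      exact Finset.sum_congr rfl (fun i _ => hP'eq i)
    have e6 : ∑ i : Fin (k + 1), P i = 2 * s + (2 * T + k) := by
      rw [hP, Fin.sum_cons]
      have : ∑ j : Fin k, (2 * t j + 1) = 2 * T + k := by
        rw [Finset.sum_add_distrib, ← Finset.mul_sum]
        simp [hT]
      omega
    omega
  have hex : ∃ p, k + 2 ≤ ∑ q ∈ Finset.range (p + 1), a q := ⟨k, by rw [htotal]; omega⟩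
  set d := Nat.find hex with hdd
  have hd : k + 2 ≤ ∑ q ∈ Finset.range (d + 1), a q := Nat.find_spec hex
  have hdk : d ≤ k := Nat.find_le (by rw [htotal]; omega)
  have hmin : ∀ p, p < d → ∑ q ∈ Finset.range (p + 1), a q < k + 2 := by
    intro p hp
    exact Nat.lt_of_not_le (Nat.find_min hex hp)
  have h4 : ∑ q ∈ Finset.range (d + 1), a q ≤ 2 * m - 1 := by
    have ht'0 := ht'1 0 hk
    have hle0 := ht'le 0 hk
    rcases Nat.lt_or_ge d 1 with hd0 | hd1
    · have hd' : d = 0 := by omega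
      rw [hd']
      rw [Finset.sum_range_one, ha0]
      omega
    · rcases Nat.lt_or_ge d 2 with hd1' | hd2
      · have hd' : d = 1 := by omega
        have hW1 : ∑ q ∈ Finset.range 1, a q < k + 2 := hmin 0 (by omega)
        rw [Finset.sum_range_one, ha0] at hW1
        rw [hd', Finset.sum_range_succ, Finset.sum_range_one, ha0, ha1]
        omega
      · have hWd : ∑ q ∈ Finset.range d, a q < k + 2 := by
          have h' := hmin (d - 1) (by omega)
          rwa [show d - 1 + 1 = d by omega] at h'
        have hW2le : ∑ q ∈ Finset.range 2, a q ≤ ∑ q ∈ Finset.range d, a q :=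
          Finset.sum_le_sum_of_subset (Finset.range_subset_range.2 hd2)
        have hW2 : ∑ q ∈ Finset.range 2, a q = 2 * t' 0 + 1 + 2 * s := by
          rw [Finset.sum_range_succ, Finset.sum_range_one, ha0, ha1]
        have had : a d = 2 * t' (d - 1) + 1 := by
          have hd0 : d ≠ 0 := by omega
          have hd1'' : d ≠ 1 := by omega
          have : a d = P' d := by simp [ha, hd0, hd1'']
          rw [this, hP'succ d (by omega) hdk]
        have hled := ht'le (d - 1) (by omega)
        have hsucc : ∑ q ∈ Finset.range (d + 1), a q = ∑ q ∈ Finset.range d, a q + a d :=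
          Finset.sum_range_succ a d
        omega
  have h5 : ∑ p ∈ Finset.range (k + 1), a p ≤ (2 * m - 2) + ∑ q ∈ Finset.range (d + 1), a q := by
    rw [htotal]
    omega
  exact embed_aux (k + 1) (2 * m - 1) (2 * m - 2) P a pos (d + 1) h1 h2 h3 h4 h5
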